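/- If S is a semikernel of a digraph G and T ⊆ S, then S ∩ E*(T) is also a semikernel of G, where E* denotes the reflexive-transitive closure of the edge relation. -/
import Mathlib


/-- Out-neighbours of a set `X` under edge relation `E`. -/
def outS {V : Type*} (E : V → V → Prop) (X : Set V) : Set V := {y | ∃ x ∈ X, E x y}

/-- In-neighbours of a set `X` under edge relation `E`. -/
def inS {V : Type*} (E : V → V → Prop) (X : Set V) : Set V := {y | ∃ x ∈ X, E y x}

/-- `K` is a kernel of the digraph `(G,E)`. -/
def IsKernel {V : Type*} (G : Set V) (E : V → V → Prop) (K : Set V) : Prop :=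
  K ⊆ G ∧ inS E K = G \ K

/-- `S` is a semikernel of the digraph `(G,E)`. -/
def IsSemikernel {V : Type*} (G : Set V) (E : V → V → Prop) (S : Set V) : Prop :=
  S ⊆ G ∧ outS E S ⊆ inS E S ∧ inS E S ⊆ G \ S

theorem stmt5 {V : Type*} (G : Set V) (E : V → V → Prop) (S T : Set V)
    (hS : IsSemikernel G E S) (hT : T ⊆ S) :
    IsSemikernel G E (S ∩ {y | ∃ t ∈ T, Relation.ReflTransGen E t y}) := by
  obtain ⟨hSG, hout, hin⟩ := hS
  refine ⟨fun x hx => hSG hx.1, ?_, ?_⟩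
  · rintro y ⟨x, ⟨hxS, t, htT, hreach⟩, hxy⟩
    obtain ⟨z, hzS, hyz⟩ := hout ⟨x, hxS, hxy⟩
    exact ⟨z, ⟨hzS, t, htT, (hreach.tail hxy).tail hyz⟩, hyz⟩
  · rintro y ⟨z, hz, hyz⟩
    have := hin ⟨z, hz.1, hyz⟩
    exact ⟨this.1, fun h => this.2 h.1⟩
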